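/- Let p be a prime with p ≡ 1 (mod 3) and p ≠ 7. Then C_{U(p)^3}(p) = 3; that is: (i) every sequence (x, y, z) of length 3 in Z_p has a nonempty subsequence of consecutive terms which is a U(p)^3-weighted zero-sum sequence; and (ii) there exists a sequence of length 2 in Z_p having no nonempty subsequence of consecutive terms which is a U(p)^3-weighted zero-sum sequence. -/

import Mathlib

/-- A list `L` over `ZMod n` is an `A`-weighted zero-sum sequence if there are weights
`a₁, …, a_k ∈ A` (one per term) with `a₁x₁ + ⋯ + a_kx_k = 0`. -/
def IsWeightedZeroSum {n : ℕ} (A : Set (ZMod n)) (L : List (ZMod n)) : Prop :=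
  ∃ a : List (ZMod n), a.length = L.length ∧ (∀ w ∈ a, w ∈ A) ∧
    (List.zipWith (· * ·) a L).sum = 0

/-- `L` has a nonempty subsequence of consecutive terms which is an
`A`-weighted zero-sum sequence. -/
def HasConsecWZS {n : ℕ} (A : Set (ZMod n)) (L : List (ZMod n)) : Prop :=
  ∃ l₁ l₂ l₃ : List (ZMod n), L = l₁ ++ l₂ ++ l₃ ∧ l₂ ≠ [] ∧ IsWeightedZeroSum A l₂

/-- `L` has a nonempty subsequence (not necessarily of consecutive terms) which is an
`A`-weighted zero-sum sequence. -/
def HasSubWZS {n : ℕ} (A : Set (ZMod n)) (L : List (ZMod n)) : Prop :=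
  ∃ l : List (ZMod n), l.Sublist L ∧ l ≠ [] ∧ IsWeightedZeroSum A l


open Finset

def Cube (p : ℕ) (x : ZMod p) : Prop := ∃ u : (ZMod p)ˣ, (u : ZMod p) ^ 3 = x

variable {p : ℕ}


lemma cube_ne_zero [Fact p.Prime] {x : ZMod p} (h : Cube p x) : x ≠ 0 := by
  obtain ⟨u, rfl⟩ := h
  exact pow_ne_zero 3 u.ne_zero

lemma cube_iff [Fact p.Prime] {x : ZMod p} :
    Cube p x ↔ ∃ w : ZMod p, w ≠ 0 ∧ w ^ 3 = x := by
  constructor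
  · rintro ⟨u, rfl⟩
    exact ⟨u, u.ne_zero, rfl⟩
  · rintro ⟨w, hw, rfl⟩
    exact ⟨(isUnit_iff_ne_zero.mpr hw).unit, by simp⟩

lemma cube_chi [Fact p.Prime] {χ : MulChar (ZMod p) ℂ} (hord : χ ^ 3 = 1)
    {x : ZMod p} (h : Cube p x) : χ x = 1 := by
  obtain ⟨u, rfl⟩ := h
  rw [map_pow]
  calc (χ u) ^ 3 = (χ ^ 3) u := (MulChar.pow_apply_coe χ 3 u).symm
  _ = 1 := by rw [hord]; exact MulChar.one_apply_coe u

lemma chi_cube_of_eq_one [Fact p.Prime] {χ : MulChar (ZMod p) ℂ} (hord : orderOf χ = 3)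
    {x : ZMod p} (hx : x ≠ 0) (h : χ x = 1) : Cube p x := by
  obtain ⟨g, hg⟩ := IsCyclic.exists_generator (α := (ZMod p)ˣ)
  have hχ3 : χ ^ 3 = 1 := by rw [← hord]; exact pow_orderOf_eq_one χ
  -- ω = χ g has order 3
  set ω : ℂ := χ (g : ZMod p) with hω
  have hω3 : ω ^ 3 = 1 := by
    rw [hω, ← MulChar.pow_apply_coe, hχ3, MulChar.one_apply_coe]
  have hωne : ω ≠ 1 := by
    intro hone
    have : χ = 1 := by
      apply MulChar.ext
      intro a
      obtain ⟨k, hk⟩ := Submonoid.mem_powers_iff _ _ |>.mp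
        (mem_powers_iff_mem_zpowers.mpr (hg a))
      rw [← hk, MulChar.one_apply_coe]
      push_cast
      rw [map_pow, ← hω, hone, one_pow]
    rw [this, orderOf_one] at hord
    omega
  have hωord : orderOf ω = 3 := by
    have hdvd : orderOf ω ∣ 3 := orderOf_dvd_of_pow_eq_one hω3
    rcases (Nat.prime_three.eq_one_or_self_of_dvd _ hdvd) with h' | h'
    · exact absurd (orderOf_eq_one_iff.mp h') hωne
    · exact h'
  -- write x as g ^ k
  have hxu : IsUnit x := isUnit_iff_ne_zero.mpr hx
  obtain ⟨k, hk⟩ := Submonoid.mem_powers_iff _ _ |>.mp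
    (mem_powers_iff_mem_zpowers.mpr (hg hxu.unit))
  have hxval : ((g : (ZMod p)ˣ) : ZMod p) ^ k = x := by
    rw [← Units.val_pow_eq_pow_val, hk, IsUnit.unit_spec]
  have hωk : ω ^ k = 1 := by
    rw [hω, ← map_pow, hxval, h]
  have h3k : 3 ∣ k := hωord ▸ orderOf_dvd_of_pow_eq_one hωk
  obtain ⟨m, rfl⟩ := h3k
  exact ⟨g ^ m, by rw [← hxval]; push_cast; ring⟩

lemma exists_noncube [Fact p.Prime] (hmod : p % 3 = 1) :
    ∃ x : ZMod p, x ≠ 0 ∧ ¬ Cube p x := by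
  obtain ⟨g, hg⟩ := IsCyclic.exists_generator (α := (ZMod p)ˣ)
  refine ⟨(g : ZMod p), g.ne_zero, ?_⟩
  rintro ⟨u, hu⟩
  have hgu : u ^ 3 = g := Units.ext (by push_cast; exact hu)
  obtain ⟨k, hk⟩ := Submonoid.mem_powers_iff _ _ |>.mp
    (mem_powers_iff_mem_zpowers.mpr (hg u))
  have hord : orderOf g = p - 1 := by
    rw [orderOf_eq_card_of_forall_mem_zpowers hg, Nat.card_eq_fintype_card,
      ZMod.card_units_eq_totient, Nat.totient_prime (Fact.out : p.Prime)]
  have hgg : g ^ (3 * k) = g ^ 1 := by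
    rw [pow_one, mul_comm, pow_mul, hk, hgu]
  rw [pow_eq_pow_iff_modEq, hord] at hgg
  have h3 : 3 ∣ p - 1 := by
    have := (Fact.out : p.Prime).two_le; omega
  obtain ⟨c, hc⟩ := hgg.dvd
  obtain ⟨t, ht⟩ := h3
  have hp2 : 2 ≤ p := (Fact.out : p.Prime).two_le
  have hcast : ((p - 1 : ℕ) : ℤ) = 3 * (t : ℤ) := by
    rw [ht]; push_cast; ring
  have h3d : (3 : ℤ) ∣ 1 - 3 * (k : ℤ) := by
    refine ⟨t * c, ?_⟩
    rw [← mul_assoc, ← hcast]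
    exact_mod_cast hc
  obtain ⟨d, hd⟩ := h3d
  omega

lemma key_large [Fact p.Prime] (hmod : p % 3 = 1) (hp17 : 17 ≤ p)
    {r s : ZMod p} (hr : r ≠ 0) (hs : s ≠ 0) :
    ∃ u v : ZMod p, Cube p u ∧ Cube p v ∧ 1 + u * r + v * s = 0 := by
  by_contra hcon
  push_neg at hcon
  have hp := (Fact.out : p.Prime)
  have h3 : (3 : ℕ) ∣ Fintype.card (ZMod p) - 1 := by
    rw [ZMod.card]; omega
  obtain ⟨χ, hord⟩ := MulChar.exists_mulChar_orderOf (ZMod p) h3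
    (Complex.isPrimitiveRoot_exp 3 (by norm_num))
  have hχ3 : χ ^ 3 = 1 := by rw [← hord]; exact pow_orderOf_eq_one χ
  have hχ1 : χ ≠ 1 := by
    intro h; rw [h, orderOf_one] at hord; omega
  have hχ21 : χ ^ 2 ≠ 1 := by
    intro h
    have := orderOf_dvd_of_pow_eq_one h
    rw [hord] at this; omega
  have hχ23 : (χ ^ 2) ^ 3 = 1 := by rw [← pow_mul, mul_comm, pow_mul, hχ3, one_pow]
  have hinv : χ⁻¹ = χ ^ 2 := by
    apply inv_eq_of_mul_eq_one_right
    rw [← pow_succ']; exact hχ3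
  have hχχ : χ * χ ≠ 1 := by rwa [← pow_two]
  -- `f x` is the value forced for `v` given `u = x`
  set f : ZMod p → ZMod p := fun x => (-1 - r * x) * s⁻¹ with hf
  -- uniform reindexing lemma
  have Egen : ∀ ψ φ : MulChar (ZMod p) ℂ,
      ∑ x : ZMod p, ψ x * φ (f x) = ψ (-r⁻¹) * φ (-s⁻¹) * jacobiSum ψ φ := by
    intro ψ φ
    have hrw : ψ (-r⁻¹) * φ (-s⁻¹) * jacobiSum ψ φ
        = ∑ t : ZMod p, ψ (-r⁻¹ * t) * φ (-s⁻¹ * (1 - t)) := by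
      simp only [jacobiSum, Finset.mul_sum]
      exact Finset.sum_congr rfl fun t _ => by rw [map_mul, map_mul]; ring
    rw [hrw]
    apply Finset.sum_nbij' (fun x => -(r * x)) (fun t => -r⁻¹ * t)
    · intro a _; exact Finset.mem_univ _
    · intro a _; exact Finset.mem_univ _
    · intro x _; field_simp
    · intro t _; field_simp
    · intro x _
      congr 1
      · congr 1; field_simp
      · congr 1; rw [hf]; field_simp; ring
  -- the indicator of nonzero cubes
  have cube_or : ∀ x : ZMod p, ¬ Cube p x →
      (1 : MulChar (ZMod p) ℂ) x + χ x + (χ ^ 2) x = 0 := by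
    intro x hx
    by_cases hx0 : x = 0
    · subst hx0
      rw [MulChar.map_nonunit _ not_isUnit_zero, MulChar.map_nonunit _ not_isUnit_zero,
        MulChar.map_nonunit _ not_isUnit_zero]; ring
    · have hu : IsUnit x := isUnit_iff_ne_zero.mpr hx0
      have h1 : (1 : MulChar (ZMod p) ℂ) x = 1 := MulChar.one_apply hu
      have h2 : (χ ^ 2) x = (χ x) ^ 2 := MulChar.pow_apply' χ (by norm_num) x
      have hz3 : (χ x) ^ 3 = 1 := by
        rw [← MulChar.pow_apply' χ (by norm_num) x, hχ3, MulChar.one_apply hu]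
      have hzne : χ x ≠ 1 := fun h => hx (chi_cube_of_eq_one hord hx0 h)
      rw [h1, h2]
      have hfac : (χ x - 1) * (1 + χ x + (χ x) ^ 2) = 0 := by linear_combination hz3
      rcases mul_eq_zero.mp hfac with h | h
      · exact absurd (by linear_combination h) hzne
      · linear_combination h
  -- the full sum vanishes, given there is no solution
  have hT : ∑ x : ZMod p, ((1 : MulChar (ZMod p) ℂ) x + χ x + (χ ^ 2) x) *
      ((1 : MulChar (ZMod p) ℂ) (f x) + χ (f x) + (χ ^ 2) (f x)) = 0 := by
    apply Finset.sum_eq_zero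
    intro x _
    by_cases hcx : Cube p x
    · by_cases hcf : Cube p (f x)
      · exfalso
        apply hcon x (f x) hcx hcf
        rw [hf]; field_simp; ring
      · rw [cube_or _ hcf, mul_zero]
    · rw [cube_or _ hcx, zero_mul]
  -- expand into 9 sums
  have hsplit : ∑ x : ZMod p, ((1 : MulChar (ZMod p) ℂ) x + χ x + (χ ^ 2) x) *
      ((1 : MulChar (ZMod p) ℂ) (f x) + χ (f x) + (χ ^ 2) (f x))
      = (∑ x : ZMod p, (1 : MulChar (ZMod p) ℂ) x * (1 : MulChar (ZMod p) ℂ) (f x))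
      + (∑ x : ZMod p, (1 : MulChar (ZMod p) ℂ) x * χ (f x))
      + (∑ x : ZMod p, (1 : MulChar (ZMod p) ℂ) x * (χ ^ 2) (f x))
      + (∑ x : ZMod p, χ x * (1 : MulChar (ZMod p) ℂ) (f x))
      + (∑ x : ZMod p, χ x * χ (f x))
      + (∑ x : ZMod p, χ x * (χ ^ 2) (f x))
      + (∑ x : ZMod p, (χ ^ 2) x * (1 : MulChar (ZMod p) ℂ) (f x))
      + (∑ x : ZMod p, (χ ^ 2) x * χ (f x))
      + (∑ x : ZMod p, (χ ^ 2) x * (χ ^ 2) (f x)) := by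
    simp only [← Finset.sum_add_distrib]
    exact Finset.sum_congr rfl fun x _ => by ring
  rw [hsplit] at hT
  rw [Egen, Egen, Egen, Egen, Egen, Egen, Egen, Egen, Egen] at hT
  -- Jacobi sum values
  have hrne : (-r⁻¹ : ZMod p) ≠ 0 := neg_ne_zero.mpr (inv_ne_zero hr)
  have hsne : (-s⁻¹ : ZMod p) ≠ 0 := neg_ne_zero.mpr (inv_ne_zero hs)
  have hJ00 : jacobiSum (1 : MulChar (ZMod p) ℂ) 1 = (p : ℂ) - 2 := by
    rw [jacobiSum_one_one, ZMod.card]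
  have hJ01 : jacobiSum (1 : MulChar (ZMod p) ℂ) χ = -1 := jacobiSum_one_nontrivial hχ1
  have hJ02 : jacobiSum (1 : MulChar (ZMod p) ℂ) (χ ^ 2) = -1 := jacobiSum_one_nontrivial hχ21
  have hJ10 : jacobiSum χ (1 : MulChar (ZMod p) ℂ) = -1 := by
    rw [jacobiSum_comm]; exact hJ01
  have hJ20 : jacobiSum (χ ^ 2) (1 : MulChar (ZMod p) ℂ) = -1 := by
    rw [jacobiSum_comm]; exact hJ02
  have hcm1 : Cube p (-1 : ZMod p) := ⟨-1, by push_cast; ring⟩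
  have hχm1 : χ (-1 : ZMod p) = 1 := by
    obtain ⟨u, hu⟩ := hcm1
    rw [← hu, map_pow]
    calc (χ u) ^ 3 = (χ ^ 3) u := (MulChar.pow_apply_coe χ 3 u).symm
    _ = 1 := by rw [hχ3]; exact MulChar.one_apply_coe u
  have hJ12 : jacobiSum χ (χ ^ 2) = -1 := by
    rw [← hinv, jacobiSum_nontrivial_inv hχ1, hχm1]
  have hJ21 : jacobiSum (χ ^ 2) χ = -1 := by rw [jacobiSum_comm]; exact hJ12
  -- conjugation relation between the two remaining Jacobi sums
  have hstar : jacobiSum (χ ^ 2) (χ ^ 2) = (starRingEnd ℂ) (jacobiSum χ χ) := by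
    simp only [jacobiSum, map_sum, map_mul]
    apply Finset.sum_congr rfl
    intro t _
    rw [starRingEnd_apply, starRingEnd_apply, MulChar.star_apply', MulChar.star_apply', hinv]
  have hcharne : ringChar ℂ ≠ ringChar (ZMod p) := by
    rw [ringChar.eq_zero, ZMod.ringChar_zmod_n]
    exact fun h => hp.ne_zero h.symm
  have hnormJ : ‖jacobiSum χ χ‖ ^ 2 = (p : ℝ) := by
    have h := jacobiSum_mul_jacobiSum_inv hcharne hχ1 hχ1 hχχ
    rw [hinv, hstar, Complex.mul_conj, ZMod.card] at h
    have h' : (Complex.normSq (jacobiSum χ χ) : ℂ) = ((p : ℝ) : ℂ) := by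
      rw [h]; norm_num
    rw [Complex.sq_norm]
    exact Complex.ofReal_inj.mp h'
  -- norms of character values at units
  have hnorm : ∀ ψ : MulChar (ZMod p) ℂ, ψ ^ 3 = 1 → ∀ x : ZMod p, x ≠ 0 → ‖ψ x‖ = 1 := by
    intro ψ hψ x hx
    have hu : IsUnit x := isUnit_iff_ne_zero.mpr hx
    have : (ψ x) ^ 3 = 1 := by
      rw [← MulChar.pow_apply' ψ (by norm_num) x, hψ, MulChar.one_apply hu]
    exact Complex.norm_eq_one_of_pow_eq_one this (by norm_num)
  -- final contradiction via norms
  rw [hstar] at hT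
  simp only [MulChar.one_apply (isUnit_iff_ne_zero.mpr hrne),
    MulChar.one_apply (isUnit_iff_ne_zero.mpr hsne),
    hJ00, hJ01, hJ02, hJ10, hJ20, hJ12, hJ21] at hT
  set a1 := χ (-r⁻¹ : ZMod p) with ha1
  set a2 := (χ ^ 2) (-r⁻¹ : ZMod p) with ha2
  set b1 := χ (-s⁻¹ : ZMod p) with hb1
  set b2 := (χ ^ 2) (-s⁻¹ : ZMod p) with hb2
  set J := jacobiSum χ χ with hJ
  have hkey : (p : ℂ) - 2
      = b1 + b2 + a1 + a2 + a1 * b2 + a2 * b1 - a1 * b1 * J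
          - a2 * b2 * (starRingEnd ℂ) J := by
    linear_combination hT
  have hna1 : ‖a1‖ = 1 := hnorm χ hχ3 _ hrne
  have hna2 : ‖a2‖ = 1 := hnorm (χ ^ 2) hχ23 _ hrne
  have hnb1 : ‖b1‖ = 1 := hnorm χ hχ3 _ hsne
  have hnb2 : ‖b2‖ = 1 := hnorm (χ ^ 2) hχ23 _ hsne
  have hnJc : ‖(starRingEnd ℂ) J‖ = ‖J‖ := by
    rw [starRingEnd_apply]; exact norm_star _
  have n1 : ‖a1 * b2‖ = 1 := by rw [norm_mul, hna1, hnb2, mul_one]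
  have n2 : ‖a2 * b1‖ = 1 := by rw [norm_mul, hna2, hnb1, mul_one]
  have n3 : ‖a1 * b1 * J‖ = ‖J‖ := by rw [norm_mul, norm_mul, hna1, hnb1]; ring
  have n4 : ‖a2 * b2 * (starRingEnd ℂ) J‖ = ‖J‖ := by
    rw [norm_mul, norm_mul, hna2, hnb2, hnJc]; ring
  have t1 := norm_sub_le (b1 + b2 + a1 + a2 + a1 * b2 + a2 * b1 - a1 * b1 * J)
    (a2 * b2 * (starRingEnd ℂ) J)
  have t2 := norm_sub_le (b1 + b2 + a1 + a2 + a1 * b2 + a2 * b1) (a1 * b1 * J)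
  have t3 := norm_add_le (b1 + b2 + a1 + a2 + a1 * b2) (a2 * b1)
  have t4 := norm_add_le (b1 + b2 + a1 + a2) (a1 * b2)
  have t5 := norm_add_le (b1 + b2 + a1) a2
  have t6 := norm_add_le (b1 + b2) a1
  have t7 := norm_add_le b1 b2
  have hfin : (p : ℝ) - 2 ≤ 6 + 2 * ‖J‖ := by
    have hps : ((p : ℂ) - 2) = (((p : ℝ) - 2 : ℝ) : ℂ) := by push_cast; ring
    have hge : (17 : ℝ) ≤ (p : ℝ) := by exact_mod_cast hp17
    have h0 : ‖(p : ℂ) - 2‖ = (p : ℝ) - 2 := by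
      rw [hps, Complex.norm_real, Real.norm_eq_abs, abs_of_nonneg (by linarith)]
    calc (p : ℝ) - 2 = ‖(p : ℂ) - 2‖ := h0.symm
      _ = ‖b1 + b2 + a1 + a2 + a1 * b2 + a2 * b1 - a1 * b1 * J
          - a2 * b2 * (starRingEnd ℂ) J‖ := by rw [hkey]
      _ ≤ 6 + 2 * ‖J‖ := by
          linarith [t1, t2, t3, t4, t5, t6, t7, n1, n2, n3, n4, hna1, hna2, hnb1, hnb2]
  have hge : (17 : ℝ) ≤ (p : ℝ) := by exact_mod_cast hp17
  nlinarith [hnormJ, hfin, hge, norm_nonneg J, sq_nonneg (‖J‖ - 4)]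



set_option maxRecDepth 100000 in
lemma key13 : ∀ r s : ZMod 13, r ≠ 0 → s ≠ 0 →
    (∃ w : ZMod 13, w ≠ 0 ∧ w ^ 3 = r) ∨
    (∃ w : ZMod 13, w ≠ 0 ∧ w ^ 3 * r = s) ∨
    (∃ w₁ w₂ : ZMod 13, w₁ ≠ 0 ∧ w₂ ≠ 0 ∧ 1 + w₁ ^ 3 * r + w₂ ^ 3 * s = 0) := by
  decide

lemma main_disj (p : ℕ) [Fact p.Prime] (hmod : p % 3 = 1) (h7 : p ≠ 7)
    {r s : ZMod p} (hr : r ≠ 0) (hs : s ≠ 0) :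
    Cube p r ∨ (∃ w : ZMod p, Cube p w ∧ w * r = s) ∨
      (∃ u v : ZMod p, Cube p u ∧ Cube p v ∧ 1 + u * r + v * s = 0) := by
  have hp := (Fact.out : p.Prime)
  rcases le_or_gt 17 p with h17 | h17
  · exact Or.inr (Or.inr (key_large hmod h17 hr hs))
  · have h13 : p = 13 := by
      have h2 := hp.two_le
      interval_cases p <;> first | rfl | omega | (exfalso; revert hp; norm_num)
    subst h13
    rcases key13 r s hr hs with ⟨w, hw0, hw⟩ | ⟨w, hw0, hw⟩ | ⟨w₁, w₂, h1, h2, h⟩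
    · exact Or.inl (cube_iff.mpr ⟨w, hw0, hw⟩)
    · exact Or.inr (Or.inl ⟨w ^ 3, cube_iff.mpr ⟨w, hw0, rfl⟩, hw⟩)
    · exact Or.inr (Or.inr ⟨w₁ ^ 3, w₂ ^ 3, cube_iff.mpr ⟨w₁, h1, rfl⟩,
        cube_iff.mpr ⟨w₂, h2, rfl⟩, h⟩)

lemma sub_two {α : Type*} {l₁ l₂ l₃ : List α} {a b : α} (h : l₁ ++ l₂ ++ l₃ = [a, b])
    (hne : l₂ ≠ []) : l₂ = [a] ∨ l₂ = [b] ∨ l₂ = [a, b] := by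
  rcases l₁ with _ | ⟨c, _ | ⟨d, l₁⟩⟩ <;>
    rcases l₂ with _ | ⟨e, _ | ⟨f, _ | ⟨k, l₂⟩⟩⟩ <;>
    simp_all

theorem C_of_cubes_prime (p : ℕ) (hp : p.Prime) (hmod : p % 3 = 1) (h7 : p ≠ 7) :
    (∀ L : List (ZMod p), L.length = 3 →
      HasConsecWZS {x : ZMod p | ∃ u : (ZMod p)ˣ, (u : ZMod p) ^ 3 = x} L) ∧
    (∃ L : List (ZMod p), L.length = 2 ∧
      ¬ HasConsecWZS {x : ZMod p | ∃ u : (ZMod p)ˣ, (u : ZMod p) ^ 3 = x} L) := by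
  haveI : Fact p.Prime := ⟨hp⟩
  set A : Set (ZMod p) := {x : ZMod p | ∃ u : (ZMod p)ˣ, (u : ZMod p) ^ 3 = x} with hA
  have hmemA : ∀ x : ZMod p, x ∈ A ↔ Cube p x := fun x => Iff.rfl
  have hone : (1 : ZMod p) ∈ A := ⟨1, by simp⟩
  constructor
  · intro L hL
    obtain ⟨x, y, z, rfl⟩ := List.length_eq_three.mp hL
    by_cases hx : x = 0
    · exact ⟨[], [x], [y, z], by simp, by simp,
        ⟨[1], rfl, by simpa using hone, by simp [hx]⟩⟩
    by_cases hy : y = 0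
    · exact ⟨[x], [y], [z], by simp, by simp,
        ⟨[1], rfl, by simpa using hone, by simp [hy]⟩⟩
    by_cases hz : z = 0
    · exact ⟨[x, y], [z], [], by simp, by simp,
        ⟨[1], rfl, by simpa using hone, by simp [hz]⟩⟩
    have hr : y * x⁻¹ ≠ 0 := mul_ne_zero hy (inv_ne_zero hx)
    have hs : z * x⁻¹ ≠ 0 := mul_ne_zero hz (inv_ne_zero hx)
    rcases main_disj p hmod h7 hr hs with ⟨u, hu⟩ | ⟨w, ⟨u, hu⟩, hws⟩ | ⟨u', v', hcu, hcv, heq⟩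
    · -- y/x is a cube : use [x, y]
      refine ⟨[], [x, y], [z], by simp, by simp,
        ⟨[((-u : (ZMod p)ˣ) : ZMod p) ^ 3, 1], rfl, ?_, ?_⟩⟩
      · intro w hw
        simp only [List.mem_cons, List.not_mem_nil, or_false] at hw
        rcases hw with rfl | rfl
        · exact ⟨-u, rfl⟩
        · exact hone
      · simp only [List.zipWith, List.sum_cons, List.sum_nil, add_zero, one_mul]
        push_cast
        -- goal : (-↑u)^3 * x + y = 0
        have hodd : ((-(u : ZMod p)) ^ 3 : ZMod p) = -((u : ZMod p) ^ 3) := by ring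
        rw [hodd]
        -- from hu : ↑u^3 = y * x⁻¹
        linear_combination (-x) * hu + (-y) * (inv_mul_cancel₀ hx)
    · -- z/y is a cube : use [y, z]
      refine ⟨[x], [y, z], [], by simp, by simp,
        ⟨[(u : ZMod p) ^ 3, ((-1 : (ZMod p)ˣ) : ZMod p) ^ 3], rfl, ?_, ?_⟩⟩
      · intro w hw
        simp only [List.mem_cons, List.not_mem_nil, or_false] at hw
        rcases hw with rfl | rfl
        · exact ⟨u, rfl⟩
        · exact ⟨-1, rfl⟩
      · simp only [List.zipWith, List.sum_cons, List.sum_nil, add_zero]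
        push_cast
        -- goal : ↑u^3 * y + (-1)^3 * z = 0
        linear_combination y * hu + x * hws - (w * y - z) * (mul_inv_cancel₀ hx)
    · -- the whole list works
      refine ⟨[], [x, y, z], [], by simp, by simp, ⟨[1, u', v'], rfl, ?_, ?_⟩⟩
      · intro w hw
        simp only [List.mem_cons, List.not_mem_nil, or_false] at hw
        rcases hw with rfl | rfl | rfl
        · exact hone
        · exact hcu
        · exact hcv
      · simp only [List.zipWith, List.sum_cons, List.sum_nil, add_zero, one_mul]
        have := congrArg (fun t => t * x) heq
        field_simp at this
        linear_combination this
  · obtain ⟨g, hg0, hgnc⟩ := exists_noncube hmod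
    refine ⟨[1, g], rfl, ?_⟩
    rintro ⟨l₁, l₂, l₃, heq, hne, a, hlen, hmem, hsum⟩
    have h1ne : (1 : ZMod p) ≠ 0 := one_ne_zero
    have hwne : ∀ w ∈ a, w ≠ 0 := by
      intro w hw
      obtain ⟨u, hu⟩ := hmem w hw
      rw [← hu]
      exact pow_ne_zero 3 u.ne_zero
    rcases sub_two heq.symm hne with h2 | h2 | h2 <;> subst h2
    · obtain ⟨w, rfl⟩ := List.length_eq_one_iff.mp hlen
      simp only [List.zipWith, List.sum_cons, List.sum_nil, add_zero, mul_one] at hsum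
      exact hwne w (by simp) hsum
    · obtain ⟨w, rfl⟩ := List.length_eq_one_iff.mp hlen
      simp only [List.zipWith, List.sum_cons, List.sum_nil, add_zero] at hsum
      rcases mul_eq_zero.mp hsum with h | h
      · exact hwne w (by simp) h
      · exact hg0 h
    · obtain ⟨w₁, w₂, rfl⟩ := List.length_eq_two.mp hlen
      simp only [List.zipWith, List.sum_cons, List.sum_nil, add_zero, mul_one] at hsum
      -- w₁ + w₂ * g = 0
      obtain ⟨u₁, hu₁⟩ := hmem w₁ (by simp)
      obtain ⟨u₂, hu₂⟩ := hmem w₂ (by simp)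
      apply hgnc
      refine ⟨-u₁ * u₂⁻¹, ?_⟩
      have hw₂ : w₂ ≠ 0 := hwne w₂ (by simp)
      push_cast [Units.val_inv_eq_inv_val]
      rw [mul_pow, inv_pow, hu₂, Odd.neg_pow (by decide), hu₁]
      linear_combination -w₂⁻¹ * hsum + g * (inv_mul_cancel₀ hw₂)
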